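/- arXiv:2501.14078 — 6 statements merged into one kernel-verified Lean document; each statement's English description precedes it below -/
import Mathlib

section
/- Conversely, if T ∈ B(H) has a left invertible quasi-isometric lifting S on K ⊇ H with S*S H ⊆ H, then A := S*S restricted to H is invertible and satisfies A ≥ T*T, A ≥ T*AT, and R[(A - T*T)^{1/2}] = R[(A - T*AT)^{1/2}]. -/
open ContinuousLinearMap

local notation "⟪" x ", " y "⟫" => @inner ℂ _ _ x y

section Douglas
variable {H : Type*} [NormedAddCommGroup H] [InnerProductSpace ℂ H] [CompleteSpace H]

lemma douglas_range_le (B C : H →L[ℂ] H) (hB : IsSelfAdjoint B) (hC : IsSelfAdjoint C)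
    (c : ℝ) (hle : ∀ x, ‖B x‖ ≤ c * ‖C x‖) :
    LinearMap.range (B : H →ₗ[ℂ] H) ≤ LinearMap.range (C : H →ₗ[ℂ] H) := by
  have key : ∀ x y : H, C x = C y → B x = B y := by
    intro x y hxy
    have h0 : ‖B x - B y‖ ≤ 0 := by
      have := hle (x - y)
      rw [map_sub, map_sub, hxy, sub_self, norm_zero, mul_zero] at this
      exact this
    have h1 : ‖B x - B y‖ = 0 := le_antisymm h0 (norm_nonneg _)
    rwa [norm_eq_zero, sub_eq_zero] at h1
  have pick : ∀ u : LinearMap.range (C : H →ₗ[ℂ] H), {y : H // C y = (u : H)} := by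
    intro u
    exact ⟨(LinearMap.mem_range.mp u.2).choose, (LinearMap.mem_range.mp u.2).choose_spec⟩
  rintro _ ⟨x₀, rfl⟩
  let ℓ : (LinearMap.range (C : H →ₗ[ℂ] H)) →ₗ[ℂ] ℂ :=
  { toFun := fun u => ⟪x₀, B (pick u).1⟫
    map_add' := fun u v => by
      show ⟪x₀, B (pick (u + v)).1⟫ = ⟪x₀, B (pick u).1⟫ + ⟪x₀, B (pick v).1⟫
      have h1 : C (pick (u + v)).1 = C ((pick u).1 + (pick v).1) := by
        rw [map_add, (pick u).2, (pick v).2, (pick (u + v)).2]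
        rfl
      rw [key _ _ h1, map_add, inner_add_right]
    map_smul' := fun a u => by
      show ⟪x₀, B (pick (a • u)).1⟫ = (RingHom.id ℂ) a • ⟪x₀, B (pick u).1⟫
      have h1 : C (pick (a • u)).1 = C (a • (pick u).1) := by
        rw [map_smul, (pick u).2, (pick (a • u)).2]
        rfl
      rw [key _ _ h1, map_smul, inner_smul_right]
      rfl }
  have hℓ : ∀ u : LinearMap.range (C : H →ₗ[ℂ] H), ‖ℓ u‖ ≤ (c * ‖x₀‖) * ‖u‖ := by
    intro u
    have h1 : ‖ℓ u‖ ≤ ‖x₀‖ * ‖B (pick u).1‖ := norm_inner_le_norm _ _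
    have h2 : ‖B (pick u).1‖ ≤ c * ‖C (pick u).1‖ := hle _
    rw [(pick u).2] at h2
    have h3 : ‖(u : H)‖ = ‖u‖ := rfl
    calc ‖ℓ u‖ ≤ ‖x₀‖ * ‖B (pick u).1‖ := h1
      _ ≤ ‖x₀‖ * (c * ‖(u : H)‖) := by
          apply mul_le_mul_of_nonneg_left h2 (norm_nonneg _)
      _ = (c * ‖x₀‖) * ‖u‖ := by rw [h3]; ring
  let ℓc := LinearMap.mkContinuous ℓ (c * ‖x₀‖) hℓ
  obtain ⟨g, hg, -⟩ := exists_extension_norm_eq (LinearMap.range (C : H →ₗ[ℂ] H)) ℓc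
  set z := (InnerProductSpace.toDual ℂ H).symm g with hz
  refine ⟨z, ?_⟩
  apply ext_inner_right ℂ
  intro v
  have hm : C v ∈ LinearMap.range (C : H →ₗ[ℂ] H) := ⟨v, rfl⟩
  have hzv : ⟪z, C v⟫ = ⟪x₀, B v⟫ := by
    rw [hz, InnerProductSpace.toDual_symm_apply, hg ⟨C v, hm⟩]
    show ⟪x₀, B (pick ⟨C v, hm⟩).1⟫ = ⟪x₀, B v⟫
    rw [key _ _ (pick ⟨C v, hm⟩).2]
  calc ⟪C z, v⟫ = ⟪z, C v⟫ := (isSelfAdjoint_iff_isSymmetric.mp hC) z v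
    _ = ⟪x₀, B v⟫ := hzv
    _ = ⟪B x₀, v⟫ := ((isSelfAdjoint_iff_isSymmetric.mp hB) x₀ v).symm

end Douglas

section Aux
variable {H : Type*} [NormedAddCommGroup H] [InnerProductSpace ℂ H] [CompleteSpace H]
variable {K : Type*} [NormedAddCommGroup K] [InnerProductSpace ℂ K] [CompleteSpace K]

lemma aux_isPositive_adjoint_comp (U : H →L[ℂ] K) : (adjoint U ∘L U).IsPositive := by
  simpa [ContinuousLinearMap.one_def] using (isPositive_one (E := K)).adjoint_conj U

lemma aux_norm_sqrt_eq (U : H →L[ℂ] K) (D : H →L[ℂ] H) (hD : D = adjoint U ∘L U) (x : H) :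
    ‖CFC.sqrt D x‖ = ‖U x‖ := by
  have hpos : D.IsPositive := hD ▸ aux_isPositive_adjoint_comp U
  have hnn : (0 : H →L[ℂ] H) ≤ D := (nonneg_iff_isPositive D).mpr hpos
  have hs : CFC.sqrt D * CFC.sqrt D = D := CFC.sqrt_mul_sqrt_self D hnn
  have hsa : IsSelfAdjoint (CFC.sqrt D) := IsSelfAdjoint.of_nonneg (CFC.sqrt_nonneg _)
  have hadj : adjoint (CFC.sqrt D) = CFC.sqrt D := hsa.adjoint_eq
  have e1 : ⟪CFC.sqrt D x, CFC.sqrt D x⟫ = ⟪U x, U x⟫ := by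
    calc ⟪CFC.sqrt D x, CFC.sqrt D x⟫
        = ⟪x, adjoint (CFC.sqrt D) (CFC.sqrt D x)⟫ := (adjoint_inner_right _ _ _).symm
      _ = ⟪x, D x⟫ := by rw [hadj, ← ContinuousLinearMap.mul_apply, hs]
      _ = ⟪U x, U x⟫ := by rw [hD, comp_apply, adjoint_inner_right]
  rw [inner_self_eq_norm_sq_to_K, inner_self_eq_norm_sq_to_K] at e1
  have e2 : ‖CFC.sqrt D x‖ ^ 2 = ‖U x‖ ^ 2 := by
    exact_mod_cast e1
  nlinarith [norm_nonneg (CFC.sqrt D x), norm_nonneg (U x)]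

end Aux

set_option maxHeartbeats 1600000 in
/-- If `T ∈ B(H)` has a left invertible quasi-isometric lifting `S` on `K ⊇ H`
(the inclusion `H ⊆ K` being realized by a linear isometry `J`, the lifting property by
`S* J = J T*`) with `S*S H ⊆ H`, then `A := S*S |_H` (i.e. the operator `A` on `H` with
`S*S (J h) = J (A h)`) is invertible and satisfies `A ≥ T*T`, `A ≥ T*AT` and
`R[(A - T*T)^{1/2}] = R[(A - T*AT)^{1/2}]`. -/
theorem leftInvertible_quasiIsometric_lifting_necessary
    {H : Type*} [NormedAddCommGroup H] [InnerProductSpace ℂ H] [CompleteSpace H]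
    {K : Type*} [NormedAddCommGroup K] [InnerProductSpace ℂ K] [CompleteSpace K]
    (J : H →ₗᵢ[ℂ] K) (S : K →L[ℂ] K) (T A : H →L[ℂ] H)
    (hq : adjoint S ∘L adjoint S ∘L S ∘L S = adjoint S ∘L S)
    (hinv : IsUnit (adjoint S ∘L S))
    (hlift : ∀ h : H, adjoint S (J h) = J (adjoint T h))
    (hA : ∀ h : H, (adjoint S ∘L S) (J h) = J (A h)) :
    IsUnit A ∧ (A - adjoint T ∘L T).IsPositive ∧
    (A - adjoint T ∘L A ∘L T).IsPositive ∧
    LinearMap.range ((CFC.sqrt (A - adjoint T ∘L T) : H →L[ℂ] H) : H →ₗ[ℂ] H) =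
      LinearMap.range ((CFC.sqrt (A - adjoint T ∘L A ∘L T) : H →L[ℂ] H) : H →ₗ[ℂ] H) := by
  set W : H →L[ℂ] K := S ∘L J.toContinuousLinearMap - J.toContinuousLinearMap ∘L T with hW
  have hWapp : ∀ h : H, W h = S (J h) - J (T h) := fun h => rfl
  have hA' : ∀ h : H, adjoint S (S (J h)) = J (A h) := fun h => hA h
  have hq' : ∀ k : K, adjoint S (adjoint S (S (S k))) = adjoint S (S k) := by
    intro k
    have := congrArg (fun (U : K →L[ℂ] K) => U k) hq
    simpa using this
  have i1 : ∀ v x : H, ⟪S (J v), S (J x)⟫ = ⟪v, A x⟫ := by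
    intro v x
    rw [← adjoint_inner_right S (J v) (S (J x)), hA' x, J.inner_map_map]
  have i2 : ∀ v x : H, ⟪S (J v), J (T x)⟫ = ⟪v, adjoint T (T x)⟫ := by
    intro v x
    rw [← adjoint_inner_right S (J v) (J (T x)), hlift, J.inner_map_map]
  have i3 : ∀ v x : H, ⟪J (T v), S (J x)⟫ = ⟪v, adjoint T (T x)⟫ := by
    intro v x
    rw [← adjoint_inner_left S (J x) (J (T v)), hlift, J.inner_map_map,
      adjoint_inner_left, ← adjoint_inner_right]
  have i4 : ∀ v x : H, ⟪J (T v), J (T x)⟫ = ⟪v, adjoint T (T x)⟫ := by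
    intro v x
    rw [J.inner_map_map, ← adjoint_inner_right]
  have hD1 : A - adjoint T ∘L T = adjoint W ∘L W := by
    ext x
    apply ext_inner_left ℂ
    intro v
    rw [comp_apply, adjoint_inner_right W v (W x), hWapp, hWapp,
      inner_sub_left, inner_sub_right, inner_sub_right, i1, i2, i3, i4]
    simp [inner_sub_right, comp_apply]
  have hposWW : (adjoint W ∘L W).IsPositive := aux_isPositive_adjoint_comp W
  have hsaA : IsSelfAdjoint A := by
    have hA2 : A = adjoint W ∘L W + adjoint T ∘L T := by
      rw [← hD1]; abel
    rw [hA2]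
    exact hposWW.isSelfAdjoint.add (aux_isPositive_adjoint_comp T).isSelfAdjoint
  have hAmove : ∀ u w : H, ⟪A u, w⟫ = ⟪u, A w⟫ := by
    intro u w
    conv_lhs => rw [← hsaA.adjoint_eq]
    exact adjoint_inner_left A w u
  -- identities for V = S ∘L W
  set V : H →L[ℂ] K := S ∘L W with hV
  have hVapp : ∀ h : H, V h = S (S (J h)) - S (J (T h)) := by
    intro h
    rw [hV, comp_apply, hWapp, map_sub]
  have b1 : ∀ v x : H, ⟪S (S (J v)), S (S (J x))⟫ = ⟪v, A x⟫ := by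
    intro v x
    rw [← adjoint_inner_right S (S (J v)) (S (S (J x))),
      ← adjoint_inner_right S (J v) (adjoint S (S (S (J x)))), hq', hA', J.inner_map_map]
  have b2 : ∀ v x : H, ⟪S (S (J v)), S (J (T x))⟫ = ⟪v, adjoint T (A (T x))⟫ := by
    intro v x
    rw [← adjoint_inner_right S (S (J v)) (S (J (T x))), hA',
      ← adjoint_inner_right S (J v) (J (A (T x))), hlift, J.inner_map_map]
  have b3 : ∀ v x : H, ⟪S (J (T v)), S (S (J x))⟫ = ⟪v, adjoint T (A (T x))⟫ := by
    intro v x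
    rw [← adjoint_inner_left S (S (J x)) (S (J (T v))), hA',
      ← adjoint_inner_left S (J x) (J (A (T v))), hlift, J.inner_map_map,
      adjoint_inner_left, hAmove (T v) (T x)]
    exact (adjoint_inner_right T v (A (T x))).symm
  have b4 : ∀ v x : H, ⟪S (J (T v)), S (J (T x))⟫ = ⟪v, adjoint T (A (T x))⟫ := by
    intro v x
    rw [← adjoint_inner_right S (J (T v)) (S (J (T x))), hA', J.inner_map_map]
    exact (adjoint_inner_right T v (A (T x))).symm
  have hD2 : A - adjoint T ∘L A ∘L T = adjoint V ∘L V := by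
    ext x
    apply ext_inner_left ℂ
    intro v
    rw [comp_apply, adjoint_inner_right V v (V x), hVapp, hVapp,
      inner_sub_left, inner_sub_right, inner_sub_right, b1, b2, b3, b4]
    simp [inner_sub_right, comp_apply]
  -- left inverse of S*S
  have hQ : ∀ k : K, (↑hinv.unit⁻¹ : K →L[ℂ] K) (adjoint S (S k)) = k := by
    intro k
    calc (↑hinv.unit⁻¹ : K →L[ℂ] K) (adjoint S (S k))
        = ((↑hinv.unit⁻¹ * ↑hinv.unit : K →L[ℂ] K)) k := by
          rw [IsUnit.unit_spec]; rfl
      _ = k := by rw [hinv.unit.inv_mul]; rfl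
  set Q : K →L[ℂ] K := ↑hinv.unit⁻¹ with hQdef
  set c : ℝ := ‖S‖ * ‖adjoint Q‖ + 1 with hcdef
  have hc0 : (0:ℝ) < c := by positivity
  have hkC : ∀ k : K, ‖k‖ ≤ c * ‖S k‖ := by
    intro k
    have e1 : ⟪k, k⟫ = ⟪S k, S (adjoint Q k)⟫ := by
      symm
      calc ⟪S k, S (adjoint Q k)⟫
          = ⟪adjoint S (S k), adjoint Q k⟫ := (adjoint_inner_left S (adjoint Q k) (S k)).symm
        _ = ⟪Q (adjoint S (S k)), k⟫ := adjoint_inner_right Q (adjoint S (S k)) k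
        _ = ⟪k, k⟫ := by rw [hQ k]
    have h3 : ‖(⟪k, k⟫ : ℂ)‖ = ‖k‖^2 := by
      rw [inner_self_eq_norm_sq_to_K]
      simp [norm_pow]
    have h5 : ‖S (adjoint Q k)‖ ≤ ‖S‖ * (‖adjoint Q‖ * ‖k‖) := by
      calc ‖S (adjoint Q k)‖ ≤ ‖S‖ * ‖adjoint Q k‖ := S.le_opNorm _
        _ ≤ ‖S‖ * (‖adjoint Q‖ * ‖k‖) :=
            mul_le_mul_of_nonneg_left ((adjoint Q).le_opNorm k) (norm_nonneg S)
    have e2 : ‖k‖^2 ≤ ‖S k‖ * (‖S‖ * (‖adjoint Q‖ * ‖k‖)) := by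
      calc ‖k‖^2 = ‖(⟪k, k⟫ : ℂ)‖ := h3.symm
        _ = ‖(⟪S k, S (adjoint Q k)⟫ : ℂ)‖ := by rw [e1]
        _ ≤ ‖S k‖ * ‖S (adjoint Q k)‖ := norm_inner_le_norm _ _
        _ ≤ ‖S k‖ * (‖S‖ * (‖adjoint Q‖ * ‖k‖)) :=
            mul_le_mul_of_nonneg_left h5 (norm_nonneg _)
    by_cases hk0 : ‖k‖ = 0
    · rw [hk0]; positivity
    · have hkpos : 0 < ‖k‖ := lt_of_le_of_ne (norm_nonneg k) (Ne.symm hk0)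
      rw [hcdef]
      nlinarith [e2, hkpos, norm_nonneg (S k),
        mul_nonneg (norm_nonneg (S k)) hkpos.le]
  have hSJh : ∀ h : H, ‖h‖ ≤ c * ‖S (J h)‖ := by
    intro h
    have := hkC (J h)
    rwa [J.norm_map] at this
  have hinnerA : ∀ h : H, ⟪h, A h⟫ = ((‖S (J h)‖ : ℂ))^2 := by
    intro h
    rw [← i1, inner_self_eq_norm_sq_to_K]
    norm_cast
  have hAlow : ∀ h : H, ‖h‖ ≤ (c^2) * ‖A h‖ := by
    intro h
    have h2 : ‖S (J h)‖^2 ≤ ‖h‖ * ‖A h‖ := by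
      have h6 := norm_inner_le_norm (𝕜 := ℂ) h (A h)
      rw [hinnerA h] at h6
      calc ‖S (J h)‖^2 = ‖((‖S (J h)‖ : ℂ))^2‖ := by simp [norm_pow]
        _ ≤ ‖h‖ * ‖A h‖ := h6
    have h1 := hSJh h
    by_cases hh : ‖h‖ = 0
    · rw [hh]; positivity
    · have hhp : 0 < ‖h‖ := lt_of_le_of_ne (norm_nonneg h) (Ne.symm hh)
      nlinarith [norm_nonneg (A h), norm_nonneg (S (J h)), h1, h2,
        mul_le_mul h1 h1 (norm_nonneg h) (by positivity),
        mul_le_mul_of_nonneg_left h2 (sq_nonneg c),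
        mul_nonneg (norm_nonneg (A h)) hhp.le]
  have hker : LinearMap.ker (A : H →ₗ[ℂ] H) = ⊥ := by
    rw [LinearMap.ker_eq_bot, ContinuousLinearMap.coe_coe]
    intro a b hab
    have h7 : ‖a - b‖ ≤ c^2 * ‖A (a - b)‖ := hAlow _
    rw [map_sub, hab, sub_self, norm_zero, mul_zero] at h7
    have h8 : ‖a - b‖ = 0 := le_antisymm h7 (norm_nonneg _)
    rwa [norm_eq_zero, sub_eq_zero] at h8
  have hclosed : IsClosed (LinearMap.range (A : H →ₗ[ℂ] H) : Set H) := by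
    have halip : AntilipschitzWith (⟨c^2, by positivity⟩ : NNReal) A :=
      ContinuousLinearMap.antilipschitz_of_bound A (fun x => hAlow x)
    have h9 := halip.isClosed_range A.uniformContinuous
    convert h9 using 1
    exact LinearMap.coe_range (A : H →ₗ[ℂ] H)
  have hsurj : LinearMap.range (A : H →ₗ[ℂ] H) = ⊤ := by
    haveI : CompleteSpace (LinearMap.range (A : H →ₗ[ℂ] H)) := hclosed.completeSpace_coe
    rw [← Submodule.orthogonal_eq_bot_iff, Submodule.eq_bot_iff]
    intro y hy
    have h0 : ⟪A y, y⟫ = 0 := (Submodule.mem_orthogonal _ y).mp hy (A y) ⟨y, rfl⟩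
    have h1 : ⟪y, A y⟫ = 0 := by rw [← inner_conj_symm, h0, map_zero]
    have h2 : ((‖S (J y)‖ : ℂ))^2 = 0 := by rw [← hinnerA y, h1]
    have h3 : ‖S (J y)‖ = 0 := by
      have := pow_eq_zero_iff (two_ne_zero) |>.mp h2
      exact_mod_cast this
    have h4 := hSJh y
    rw [h3, mul_zero] at h4
    exact norm_le_zero_iff.mp h4
  have hunit : IsUnit A := by
    refine ⟨⟨A, ((ContinuousLinearEquiv.ofBijective A hker hsurj).symm : H →L[ℂ] H), ?_, ?_⟩, rfl⟩
    · ext x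
      exact ContinuousLinearEquiv.ofBijective_apply_symm_apply A hker hsurj x
    · ext x
      exact ContinuousLinearEquiv.ofBijective_symm_apply_apply A hker hsurj x
  -- range equality
  have hs1 : IsSelfAdjoint (CFC.sqrt (A - adjoint T ∘L T)) :=
    IsSelfAdjoint.of_nonneg (CFC.sqrt_nonneg _)
  have hs2 : IsSelfAdjoint (CFC.sqrt (A - adjoint T ∘L A ∘L T)) :=
    IsSelfAdjoint.of_nonneg (CFC.sqrt_nonneg _)
  have hn1 : ∀ x, ‖CFC.sqrt (A - adjoint T ∘L T) x‖ = ‖W x‖ :=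
    fun x => aux_norm_sqrt_eq W _ hD1 x
  have hn2 : ∀ x, ‖CFC.sqrt (A - adjoint T ∘L A ∘L T) x‖ = ‖V x‖ :=
    fun x => aux_norm_sqrt_eq V _ hD2 x
  have hrange : LinearMap.range ((CFC.sqrt (A - adjoint T ∘L T) : H →L[ℂ] H) : H →ₗ[ℂ] H) =
      LinearMap.range ((CFC.sqrt (A - adjoint T ∘L A ∘L T) : H →L[ℂ] H) : H →ₗ[ℂ] H) := by
    apply le_antisymm
    · apply douglas_range_le _ _ hs1 hs2 c
      intro x
      rw [hn1, hn2]
      have := hkC (W x)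
      simpa [hV, comp_apply] using this
    · apply douglas_range_le _ _ hs2 hs1 ‖S‖
      intro x
      rw [hn1, hn2]
      calc ‖V x‖ = ‖S (W x)‖ := by rw [hV, comp_apply]
        _ ≤ ‖S‖ * ‖W x‖ := S.le_opNorm _
  exact ⟨hunit, by rw [hD1]; exact hposWW,
    by rw [hD2]; exact aux_isPositive_adjoint_comp V, hrange⟩
end

section
/- An operator T ∈ B(H) is a quasicontraction (T*²T² ≤ T*T) if and only if there exists an invertible operator A ∈ B(H) such that T*T = T*AT ≤ A. -/
open ContinuousLinearMap

open scoped InnerProductSpace NNReal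

section Aux

variable {H : Type*} [NormedAddCommGroup H] [InnerProductSpace ℂ H] [CompleteSpace H]

private lemma aux_easy_dir (T A : H →L[ℂ] H)
    (h1 : adjoint T ∘L T = adjoint T ∘L A ∘L T)
    (h2 : (A - adjoint T ∘L A ∘L T).IsPositive) :
    (adjoint T ∘L T - adjoint T ∘L adjoint T ∘L T ∘L T).IsPositive := by
  have h1' : ∀ x, adjoint T (T x) = adjoint T (A (T x)) := fun x => by
    have := DFunLike.congr_fun h1 x
    simpa using this
  have key : adjoint T ∘L (A - adjoint T ∘L A ∘L T) ∘L T
      = adjoint T ∘L T - adjoint T ∘L adjoint T ∘L T ∘L T := by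
    ext x
    simp only [coe_comp', Function.comp_apply, sub_apply, map_sub]
    rw [← h1' x, ← h1' (T x)]
  have := h2.adjoint_conj T
  rwa [key] at this

end Aux

set_option maxHeartbeats 1000000 in
/-- An operator `T ∈ B(H)` is a quasicontraction (`T*²T² ≤ T*T`) if and only if
there exists an invertible operator `A ∈ B(H)` such that `T*T = T*AT ≤ A`. -/
theorem quasicontraction_iff_exists_intertwiner
    {H : Type*} [NormedAddCommGroup H] [InnerProductSpace ℂ H] [CompleteSpace H]
    (T : H →L[ℂ] H) :
    (adjoint T ∘L T - adjoint T ∘L adjoint T ∘L T ∘L T).IsPositive ↔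
      ∃ A : H →L[ℂ] H, IsUnit A ∧ adjoint T ∘L T = adjoint T ∘L A ∘L T ∧
        (A - adjoint T ∘L A ∘L T).IsPositive := by
  constructor
  · intro h
    set U : Submodule ℂ H := (LinearMap.range (T : H →ₗ[ℂ] H)).topologicalClosure with hU
    haveI : CompleteSpace U := (Submodule.isClosed_topologicalClosure _).completeSpace_coe
    set P : H →L[ℂ] H := U.subtypeL ∘L U.orthogonalProjectionOnto with hPdef
    have hPsa : IsSelfAdjoint P := isSelfAdjoint_starProjection U
    have hPsymm : ∀ x y : H, ⟪P x, y⟫_ℂ = ⟪x, P y⟫_ℂ := fun x y =>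
      (isSelfAdjoint_iff_isSymmetric.mp hPsa) x y
    have hPid : ∀ x ∈ U, P x = x := by
      intro x hx
      exact Submodule.starProjection_eq_self_iff.mpr hx
    have hPmem : ∀ x : H, P x ∈ U := fun x => (U.orthogonalProjectionOnto x).2
    have hPT : ∀ x, P (T x) = T x := fun x =>
      hPid (T x) (Submodule.le_topologicalClosure _ ⟨x, rfl⟩)
    have hPTc : P ∘L T = T := ext hPT
    have hTP : adjoint T ∘L P = adjoint T := by
      conv_rhs => rw [← adjoint_adjoint T, ← hPTc]
      rw [adjoint_comp, adjoint_adjoint, hPsa.adjoint_eq]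
    have hTPv : ∀ x, adjoint T (P x) = adjoint T x := fun x => by
      simpa using DFunLike.congr_fun hTP x
    -- contraction on the closure of the range
    have hcon : ∀ u ∈ U, ‖T u‖ ≤ ‖u‖ := by
      have hclosed : IsClosed {u : H | ‖T u‖ ≤ ‖u‖} :=
        isClosed_le (T.continuous.norm) continuous_norm
      have hsub : (LinearMap.range (T : H →ₗ[ℂ] H) : Set H) ⊆ {u : H | ‖T u‖ ≤ ‖u‖} := by
        rintro _ ⟨x, rfl⟩
        have h2 := h.2 x
        rw [reApplyInnerSelf] at h2
        simp only [sub_apply, coe_comp', Function.comp_apply, inner_sub_left, map_sub,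
          adjoint_inner_left] at h2
        rw [inner_self_eq_norm_sq, inner_self_eq_norm_sq] at h2
        have hsq : ‖T (T x)‖ ^ 2 ≤ ‖T x‖ ^ 2 := by linarith [h2]
        exact (pow_le_pow_iff_left₀ (norm_nonneg _) (norm_nonneg _) two_ne_zero).mp hsq
      intro u hu
      have hu' : u ∈ closure (LinearMap.range (T : H →ₗ[ℂ] H) : Set H) := hu
      have := closure_mono hsub hu'
      rwa [hclosed.closure_eq] at this
    set M : ℝ := ‖T‖ with hM
    set c : ℝ := 2 * M ^ 2 + 1 / 2 with hc
    have hcpos : (0 : ℝ) ≤ c := by positivity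
    set S1 : H →L[ℂ] H := P - P ∘L (adjoint T ∘L T) ∘L P with hS1
    set S2 : H →L[ℂ] H := (c : ℂ) • (1 - P) with hS2
    set A : H →L[ℂ] H := adjoint T ∘L T + S1 + S2 with hA
    -- pointwise inner product formulas
    have hinner1 : ∀ x : H, ⟪(adjoint T ∘L T) x, x⟫_ℂ = (‖T x‖ : ℂ) ^ 2 := by
      intro x
      simp only [coe_comp', Function.comp_apply, adjoint_inner_left]
      exact inner_self_eq_norm_sq_to_K _
    have hPinner : ∀ x : H, ⟪P x, x⟫_ℂ = (‖P x‖ : ℂ) ^ 2 := by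
      intro x
      have : P (P x) = P x := hPid _ (hPmem x)
      calc ⟪P x, x⟫_ℂ = ⟪P (P x), x⟫_ℂ := by rw [this]
        _ = ⟪P x, P x⟫_ℂ := hPsymm _ _
        _ = (‖P x‖ : ℂ) ^ 2 := inner_self_eq_norm_sq_to_K _
    have hS1inner : ∀ x : H, ⟪S1 x, x⟫_ℂ = (‖P x‖ : ℂ) ^ 2 - (‖T (P x)‖ : ℂ) ^ 2 := by
      intro x
      simp only [hS1, sub_apply, coe_comp', Function.comp_apply, inner_sub_left]
      rw [hPinner]
      congr 1
      calc ⟪P (adjoint T (T (P x))), x⟫_ℂ = ⟪adjoint T (T (P x)), P x⟫_ℂ := hPsymm _ _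
        _ = ⟪T (P x), T (P x)⟫_ℂ := by rw [adjoint_inner_left]
        _ = (‖T (P x)‖ : ℂ) ^ 2 := inner_self_eq_norm_sq_to_K _
    have hS2inner : ∀ x : H, ⟪S2 x, x⟫_ℂ = (c : ℂ) * (‖x - P x‖ : ℂ) ^ 2 := by
      intro x
      have horth : ⟪x - P x, P x⟫_ℂ = 0 := by
        have hmem : x - P x ∈ Uᗮ := by
          have := Submodule.sub_starProjection_mem_orthogonal (K := U) x
          exact this
        rw [← inner_conj_symm, hmem (P x) (hPmem x), map_zero]
      simp only [hS2, smul_apply, sub_apply, one_apply, inner_smul_left]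
      rw [Complex.conj_ofReal]
      congr 1
      calc ⟪x - P x, x⟫_ℂ = ⟪x - P x, (x - P x) + P x⟫_ℂ := by rw [sub_add_cancel]
        _ = ⟪x - P x, x - P x⟫_ℂ + ⟪x - P x, P x⟫_ℂ := inner_add_right _ _ _
        _ = (‖x - P x‖ : ℂ) ^ 2 := by rw [horth, add_zero]; exact inner_self_eq_norm_sq_to_K _
    -- self-adjointness of the pieces
    have hTTsa : IsSelfAdjoint (adjoint T ∘L T) := by
      rw [IsSelfAdjoint, star_eq_adjoint, adjoint_comp, adjoint_adjoint]
    have hS1sa : IsSelfAdjoint S1 := by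
      rw [hS1]
      refine hPsa.sub ?_
      rw [IsSelfAdjoint, star_eq_adjoint, adjoint_comp, adjoint_comp, hPsa.adjoint_eq,
        adjoint_comp, adjoint_adjoint, comp_assoc]
    have hS2sa : IsSelfAdjoint S2 := by
      rw [hS2]
      have h1P : IsSelfAdjoint ((1 : H →L[ℂ] H) - P) :=
        (IsSelfAdjoint.one (H →L[ℂ] H)).sub hPsa
      rw [IsSelfAdjoint, star_smul, h1P.star_eq, Complex.star_def, Complex.conj_ofReal]
    have hAsa : IsSelfAdjoint A := (hTTsa.add hS1sa).add hS2sa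
    -- positivity of S1 and S2
    have hS1pos : S1.IsPositive := by
      refine ⟨isSelfAdjoint_iff_isSymmetric.mp hS1sa, fun x => ?_⟩
      rw [reApplyInnerSelf, hS1inner x]
      have hle : ‖T (P x)‖ ≤ ‖P x‖ := hcon _ (hPmem x)
      have : (‖T (P x)‖ : ℝ) ^ 2 ≤ ‖P x‖ ^ 2 := by nlinarith [norm_nonneg (T (P x))]
      simp only [← Complex.ofReal_pow, ← Complex.ofReal_sub, RCLike.re_to_complex, Complex.ofReal_re]
      linarith
    have hS2pos : S2.IsPositive := by
      refine ⟨isSelfAdjoint_iff_isSymmetric.mp hS2sa, fun x => ?_⟩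
      rw [reApplyInnerSelf, hS2inner x]
      simp only [← Complex.ofReal_pow, ← Complex.ofReal_mul, RCLike.re_to_complex, Complex.ofReal_re]
      positivity
    -- T* A T = T* T
    have hmain : adjoint T ∘L T = adjoint T ∘L A ∘L T := by
      ext x
      simp only [hA, hS1, hS2, coe_comp', Function.comp_apply, add_apply, sub_apply,
        smul_apply, one_apply, map_add, map_sub, map_smul]
      rw [hPT x, hTPv (adjoint T (T (T x)))]
      rw [show (1 : H →L[ℂ] H) (T x) = T x from rfl]
      simp only [sub_self, smul_zero, add_zero]
      abel
    -- A - T* A T = S1 + S2 is positive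
    have hApos : (A - adjoint T ∘L A ∘L T).IsPositive := by
      have heq : A - adjoint T ∘L A ∘L T = S1 + S2 := by
        rw [← hmain, hA]
        abel
      rw [heq]
      exact hS1pos.add hS2pos
    -- A is invertible
    have hAunit : IsUnit A := by
      apply isUnit_of_forall_le_norm_inner_map A (c := (1/2 : ℝ≥0)) (by norm_num)
      intro x
      have hre : (1 / 2 : ℝ) * ‖x‖ ^ 2 ≤ RCLike.re ⟪A x, x⟫_ℂ := by
        have hAx : ⟪A x, x⟫_ℂ = (‖T x‖ : ℂ) ^ 2 + ((‖P x‖ : ℂ) ^ 2 - (‖T (P x)‖ : ℂ) ^ 2)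
            + (c : ℂ) * (‖x - P x‖ : ℂ) ^ 2 := by
          rw [hA]
          simp only [add_apply, inner_add_left]
          rw [hinner1 x, hS1inner x, hS2inner x]
        rw [hAx]
        set a : ℝ := ‖P x‖
        set b : ℝ := ‖x - P x‖
        set t : ℝ := ‖T (P x)‖
        set s : ℝ := ‖T x‖
        have hre' : RCLike.re ((‖T x‖ : ℂ) ^ 2 + ((‖P x‖ : ℂ) ^ 2 - (‖T (P x)‖ : ℂ) ^ 2)
            + (c : ℂ) * (‖x - P x‖ : ℂ) ^ 2) = s ^ 2 + (a ^ 2 - t ^ 2) + c * b ^ 2 := by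
          simp only [← Complex.ofReal_pow, ← Complex.ofReal_sub, ← Complex.ofReal_mul,
            ← Complex.ofReal_add, RCLike.re_to_complex, Complex.ofReal_re]
          rfl
        rw [hre']
        -- Pythagoras: ‖x‖² = a² + b²
        have hpyth : ‖x‖ ^ 2 = a ^ 2 + b ^ 2 := by
          have horth : ⟪P x, x - P x⟫_ℂ = 0 := by
            have hmem : x - P x ∈ Uᗮ := by
              have := Submodule.sub_starProjection_mem_orthogonal (K := U) x
              exact this
            exact hmem (P x) (hPmem x)
          have hx : x = P x + (x - P x) := by abel
          calc ‖x‖ ^ 2 = ‖P x + (x - P x)‖ ^ 2 := by rw [← hx]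
            _ = a ^ 2 + 2 * RCLike.re ⟪P x, x - P x⟫_ℂ + b ^ 2 := norm_add_sq _ _
            _ = a ^ 2 + b ^ 2 := by rw [horth]; simp
        rw [hpyth]
        have hta : t ≤ a := hcon _ (hPmem x)
        have hb0 : 0 ≤ b := norm_nonneg _
        have ha0 : 0 ≤ a := norm_nonneg _
        have ht0 : 0 ≤ t := norm_nonneg _
        have hs0 : 0 ≤ s := norm_nonneg _
        have hM0 : 0 ≤ M := norm_nonneg _
        have hTv : ‖T (x - P x)‖ ≤ M * b := T.le_opNorm _
        have hsplit : t ≤ s + M * b := by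
          have : T (P x) = T x - T (x - P x) := by rw [map_sub]; abel
          calc t = ‖T x - T (x - P x)‖ := by rw [← this]
            _ ≤ ‖T x‖ + ‖T (x - P x)‖ := norm_sub_le _ _
            _ ≤ s + M * b := by exact add_le_add le_rfl hTv
        have hkey : t ^ 2 - 2 * t * (M * b) ≤ s ^ 2 := by
          rcases le_or_gt t (M * b) with hcase | hcase
          · nlinarith
          · nlinarith [sq_nonneg (s - (t - M * b))]
        rw [hc]
        nlinarith [sq_nonneg (a - 2 * M * b), mul_nonneg (mul_nonneg hM0 hb0) (sub_nonneg.mpr hta)]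
      calc ‖x‖ ^ 2 * ((1/2 : ℝ≥0) : ℝ) = (1 / 2 : ℝ) * ‖x‖ ^ 2 := by
            push_cast; ring
        _ ≤ RCLike.re ⟪A x, x⟫_ℂ := hre
        _ ≤ ‖⟪A x, x⟫_ℂ‖ := RCLike.re_le_norm _
    exact ⟨A, hAunit, hmain, hApos⟩
  · rintro ⟨A, _, h1, h2⟩
    exact aux_easy_dir T A h1 h2
end

section
/- Let Q ∈ B(K) be a quasi-isometry which is a left invertible lifting of T ∈ B(H), H ⊆ K, such that K ⊖ H ⊆ N(Q*Q - I). Then A := Q*Q restricted to H is invertible and satisfies T*T = T*AT ≤ A. -/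
open ContinuousLinearMap

local notation "⟪" x ", " y "⟫" => @inner ℂ _ _ x y

set_option maxHeartbeats 1000000 in
/-- Let `Q ∈ B(K)` be a quasi-isometry which is a left invertible lifting of
`T ∈ B(H)`, `H ⊆ K`, such that `K ⊖ H ⊆ N(Q*Q - I)`. Then `A := Q*Q |_H` is invertible and
satisfies `T*T = T*AT ≤ A`. -/
theorem quasiIsometric_lifting_isometric_on_complement
    {K : Type*} [NormedAddCommGroup K] [InnerProductSpace ℂ K] [CompleteSpace K]
    (Hs : Submodule ℂ K) [CompleteSpace Hs]
    (Q : K →L[ℂ] K) (T : Hs →L[ℂ] Hs)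
    (hq : adjoint Q ∘L adjoint Q ∘L Q ∘L Q = adjoint Q ∘L Q)
    (hinv : IsUnit (adjoint Q ∘L Q))
    (hlift : Hs.orthogonalProjectionOnto ∘L Q = T ∘L Hs.orthogonalProjectionOnto)
    (hker : ∀ k ∈ Hsᗮ, (adjoint Q ∘L Q) k = k) :
    ∀ A : Hs →L[ℂ] Hs, A = Hs.orthogonalProjectionOnto ∘L (adjoint Q ∘L Q) ∘L Hs.subtypeL →
      IsUnit A ∧ adjoint T ∘L T = adjoint T ∘L A ∘L T ∧
        (A - adjoint T ∘L A ∘L T).IsPositive := by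
  intro A hA
  set P := Hs.orthogonalProjectionOnto with hP
  set ι := Hs.subtypeL with hι
  set S := adjoint Q ∘L Q with hS
  -- S is self-adjoint (as a bilinear identity)
  have hSsa : ∀ x y : K, ⟪S x, y⟫ = ⟪x, S y⟫ := by
    intro x y
    simp [hS, adjoint_inner_left, adjoint_inner_right]
  -- quasi-isometry identity as inner products
  have hQSQ : ∀ x y : K, ⟪S (Q x), Q y⟫ = ⟪S x, y⟫ := by
    intro x y
    have h1 : ⟪(adjoint Q ∘L adjoint Q ∘L Q ∘L Q) x, y⟫ = ⟪S x, y⟫ := by rw [hq]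
    calc ⟪S (Q x), Q y⟫ = ⟪adjoint Q (S (Q x)), y⟫ := by
          rw [adjoint_inner_left]
      _ = ⟪(adjoint Q ∘L adjoint Q ∘L Q ∘L Q) x, y⟫ := rfl
      _ = ⟪S x, y⟫ := h1
  -- S maps Hs into Hs
  have hS_H : ∀ x : K, x ∈ Hs → S x ∈ Hs := by
    intro x hx
    rw [← Submodule.orthogonal_orthogonal Hs]
    intro k hk
    have : ⟪k, S x⟫ = ⟪k, x⟫ := by
      rw [← hSsa, hker k hk]
    rw [this]
    exact (Submodule.mem_orthogonal' Hs k).mp hk x hx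
  -- coercion facts
  have hcoe : ∀ x : K, ∀ hx : x ∈ Hs, (P x : K) = x := by
    intro x hx
    have : P (⟨x, hx⟩ : Hs) = ⟨x, hx⟩ := Submodule.orthogonalProjectionOnto_mem_subspace_eq_self _
    simpa using congrArg (Subtype.val) this
  have hPι : ∀ h : Hs, P (ι h) = h := by
    intro h
    exact Submodule.orthogonalProjectionOnto_mem_subspace_eq_self h
  have hιA : ∀ h : Hs, (A h : K) = S (ι h) := by
    intro h
    rw [hA]
    exact hcoe _ (hS_H _ h.2)
  -- the "defect" operator
  set D : Hs →L[ℂ] K := Q ∘L ι - ι ∘L T with hD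
  have hTh : ∀ h : Hs, T h = P (Q (ι h)) := by
    intro h
    have := congrArg (fun f => f (ι h)) hlift
    simpa [hPι] using this.symm
  have hD_mem : ∀ h : Hs, D h ∈ Hsᗮ := by
    intro h
    have : D h = Q (ι h) - P (Q (ι h)) := by
      simp only [hD, sub_apply, comp_apply, hTh h]
      rfl
    rw [this]
    exact Submodule.sub_starProjection_mem_orthogonal _
  have hdecomp : ∀ h : Hs, Q (ι h) = (ι (T h) : K) + D h := by
    intro h
    simp [hD]
  -- orthogonality of the pieces
  have horth : ∀ (a : Hs) (b : K), b ∈ Hsᗮ → ⟪(ι a : K), b⟫ = 0 := by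
    intro a b hb
    exact hb (ι a) a.2
  have horth' : ∀ (a : Hs) (b : K), b ∈ Hsᗮ → ⟪b, (ι a : K)⟫ = 0 := by
    intro a b hb
    exact (Submodule.mem_orthogonal' Hs b).mp hb (ι a) a.2
  -- inner of A
  have hA_inner : ∀ h h' : Hs, ⟪A h, h'⟫ = ⟪Q (ι h), Q (ι h')⟫ := by
    intro h h'
    have : ⟪A h, h'⟫ = ⟪(A h : K), (ι h' : K)⟫ := rfl
    rw [this, hιA, hS, comp_apply, adjoint_inner_left]
  -- key identity (1): A = T*T + D*D
  have E1 : adjoint T ∘L T + adjoint D ∘L D = A := by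
    refine ContinuousLinearMap.ext fun h => ext_inner_right ℂ fun h' => ?_
    have lhs : ⟪(adjoint T ∘L T + adjoint D ∘L D) h, h'⟫
        = ⟪T h, T h'⟫ + ⟪D h, D h'⟫ := by
      simp [inner_add_left, adjoint_inner_left]
    rw [lhs, hA_inner, hdecomp h, hdecomp h', inner_add_left, inner_add_right, inner_add_right,
      horth (T h) _ (hD_mem h'), horth' (T h') _ (hD_mem h)]
    have : ⟪(ι (T h) : K), (ι (T h') : K)⟫ = ⟪T h, T h'⟫ := rfl
    rw [this]; ring
  -- key identity (2): A = T*AT + D*D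
  have hιAT : ∀ h : Hs, S (Q (ι h)) = (ι (A (T h)) : K) + D h := by
    intro h
    rw [hdecomp h, map_add, hker _ (hD_mem h)]
    congr 1
    exact (hιA (T h)).symm
  have E2 : adjoint T ∘L A ∘L T + adjoint D ∘L D = A := by
    refine ContinuousLinearMap.ext fun h => ext_inner_right ℂ fun h' => ?_
    have lhs : ⟪(adjoint T ∘L A ∘L T + adjoint D ∘L D) h, h'⟫
        = ⟪A (T h), T h'⟫ + ⟪D h, D h'⟫ := by
      simp [inner_add_left, adjoint_inner_left]
    have rhs : ⟪A h, h'⟫ = ⟪S (Q (ι h)), Q (ι h')⟫ := by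
      calc ⟪A h, h'⟫ = ⟪Q (ι h), Q (ι h')⟫ := hA_inner h h'
        _ = ⟪S (ι h), (ι h' : K)⟫ := by simp [hS, adjoint_inner_left]
        _ = ⟪S (Q (ι h)), Q (ι h')⟫ := (hQSQ _ _).symm
    rw [lhs, rhs, hιAT h, hdecomp h', inner_add_left, inner_add_right, inner_add_right,
      horth (A (T h)) _ (hD_mem h'), horth' (T h') _ (hD_mem h)]
    have : ⟪(ι (A (T h)) : K), (ι (T h') : K)⟫ = ⟪A (T h), T h'⟫ := rfl
    rw [this]; ring
  -- conclusion 2 : T*T = T*AT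
  have hTT : adjoint T ∘L T = adjoint T ∘L A ∘L T := by
    have := E1.trans E2.symm
    exact add_right_cancel this
  -- conclusion 3 : A - T*AT = D*D is positive
  have hsub : A - adjoint T ∘L A ∘L T = adjoint D ∘L D := by
    nth_rewrite 1 [← E2]
    exact add_sub_cancel_left (adjoint T ∘L A ∘L T) (adjoint D ∘L D)
  have hpos : (A - adjoint T ∘L A ∘L T).IsPositive := by
    rw [hsub]
    rw [isPositive_def']
    constructor
    · rw [IsSelfAdjoint, ContinuousLinearMap.star_eq_adjoint, adjoint_comp, adjoint_adjoint]
    · intro x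
      simp only [reApplyInnerSelf, comp_apply, adjoint_inner_left]
      exact inner_self_nonneg
  -- conclusion 1 : A is invertible
  obtain ⟨u, hu⟩ := hinv
  set S' : K →L[ℂ] K := ↑u⁻¹ with hS'
  have hSS' : ∀ x : K, S (S' x) = x := by
    intro x
    have : (↑u * ↑u⁻¹ : K →L[ℂ] K) = 1 := by
      rw [← Units.val_mul, mul_inv_cancel, Units.val_one]
    have := congrArg (fun f => f x) this
    simpa [hu] using this
  have hS'S : ∀ x : K, S' (S x) = x := by
    intro x
    have : (↑u⁻¹ * ↑u : K →L[ℂ] K) = 1 := by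
      rw [← Units.val_mul, inv_mul_cancel, Units.val_one]
    have := congrArg (fun f => f x) this
    simpa [hu] using this
  have hS'_H : ∀ x : K, x ∈ Hs → S' x ∈ Hs := by
    intro x hx
    rw [← Submodule.orthogonal_orthogonal Hs]
    intro k hk
    have h1 : ⟪k, S' x⟫ = ⟪S k, S' x⟫ := by rw [hker k hk]
    have h2 : ⟪S k, S' x⟫ = ⟪k, S (S' x)⟫ := hSsa k (S' x)
    rw [h1, h2, hSS']
    exact (Submodule.mem_orthogonal' Hs k).mp hk x hx
  set B : Hs →L[ℂ] Hs := P ∘L S' ∘L ι with hB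
  have hAB : A * B = 1 := by
    refine ContinuousLinearMap.ext fun h => ?_
    show A (B h) = h
    have h1 : (ι (B h) : K) = S' (ι h) := hcoe _ (hS'_H _ h.2)
    have h2 : A (B h) = P (S (ι (B h))) := by rw [hA]; rfl
    rw [h2, h1, hSS']
    exact hPι h
  have hBA : B * A = 1 := by
    refine ContinuousLinearMap.ext fun h => ?_
    show B (A h) = h
    have h1 : (ι (A h) : K) = S (ι h) := hιA h
    have h2 : B (A h) = P (S' (ι (A h))) := rfl
    rw [h2, h1, hS'S]
    exact hPι h
  exact ⟨isUnit_iff_exists.mpr ⟨B, hAB, hBA⟩, hTT, hpos⟩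
end

section
/- For T ∈ B(H): there exists an invertible positive A ∈ B(H) such that T*T ≤ T*AT ≤ A and R(A - T*AT) = H = R(A - T*T), if and only if the spectral radius of T is strictly less than 1. -/
open ContinuousLinearMap RCLike Filter
open scoped ENNReal NNReal

namespace SpectralAux

variable {H : Type*} [NormedAddCommGroup H] [InnerProductSpace ℂ H] [CompleteSpace H]
local notation "⟪" x ", " y "⟫" => @inner ℂ _ _ x y

lemma cs_pos {D : H →L[ℂ] H} (hD : D.IsPositive) (x : H) :
    ‖D x‖ ^ 2 ≤ ‖D‖ * Complex.re ⟪D x, x⟫ := by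
  have hsa : ∀ y z : H, ⟪D y, z⟫ = ⟪y, D z⟫ := fun y z => by
    conv_lhs => rw [← hD.isSelfAdjoint.adjoint_eq]
    exact adjoint_inner_left D z y
  set a : ℝ := Complex.re ⟪D (D x), D x⟫ with ha
  set b : ℝ := ‖D x‖ ^ 2 with hb
  set c : ℝ := Complex.re ⟪D x, x⟫ with hc
  have key : ∀ t : ℝ, 0 ≤ a * (t * t) + (2 * b) * t + c := by
    intro t
    have h0 := hD.2 (x + (t : ℂ) • D x)
    rw [reApplyInnerSelf] at h0
    have expand : ⟪D (x + (t:ℂ) • D x), x + (t:ℂ) • D x⟫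
        = ⟪D x, x⟫ + (t:ℂ) * ⟪D x, D x⟫ + (t:ℂ) * ⟪D (D x), x⟫
          + (t:ℂ) * (t:ℂ) * ⟪D (D x), D x⟫ := by
      simp only [map_add, map_smul, inner_add_left, inner_add_right, inner_smul_left,
        inner_smul_right, Complex.conj_ofReal, smul_eq_mul]
      ring
    rw [expand] at h0
    simp only [RCLike.re_to_complex, Complex.add_re, Complex.mul_re, Complex.ofReal_re,
      Complex.ofReal_im, zero_mul, sub_zero, ← Complex.ofReal_mul] at h0
    have h1 : Complex.re ⟪D (D x), x⟫ = b := by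
      rw [hsa (D x) x, hb]; simpa using inner_self_eq_norm_sq (𝕜 := ℂ) (D x)
    have h2 : Complex.re ⟪D x, D x⟫ = b := by
      rw [hb]; simpa using inner_self_eq_norm_sq (𝕜 := ℂ) (D x)
    rw [h1, h2, ← ha, ← hc] at h0
    linarith
  have hdisc := discrim_le_zero key
  rw [discrim] at hdisc
  have hac : b ^ 2 ≤ a * c := by nlinarith
  have hcnn : 0 ≤ c := hD.2 x
  have haK : a ≤ ‖D‖ * ‖D x‖ ^ 2 := by
    calc a ≤ ‖⟪D (D x), D x⟫‖ := Complex.re_le_norm _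
    _ ≤ ‖D (D x)‖ * ‖D x‖ := norm_inner_le_norm _ _
    _ ≤ (‖D‖ * ‖D x‖) * ‖D x‖ := by
        gcongr; exact D.le_opNorm _
    _ = ‖D‖ * ‖D x‖ ^ 2 := by ring
  rcases eq_or_lt_of_le (norm_nonneg (D x)) with h0 | h0
  · rw [hb, ← h0]; simpa using mul_nonneg (norm_nonneg D) hcnn
  · have hb2 : b ^ 2 ≤ (‖D‖ * c) * b := by
      calc b ^ 2 ≤ a * c := hac
      _ ≤ (‖D‖ * ‖D x‖ ^ 2) * c := by
          rcases hcnn.eq_or_lt with h | h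
          · rw [← h]; simp
          · exact mul_le_mul_of_nonneg_right haK hcnn
      _ = (‖D‖ * c) * b := by rw [hb]; ring
    have hbpos : 0 < b := by rw [hb]; positivity
    nlinarith [hb2, hbpos]

lemma tsum_apply' {f : ℕ → H →L[ℂ] H} (hsum : Summable f) (x : H) :
    (∑' n, f n) x = ∑' n, f n x :=
  (ContinuousLinearMap.apply ℂ H x).map_tsum hsum

lemma isPositive_tsum {f : ℕ → H →L[ℂ] H} (hsum : Summable f) (hf : ∀ n, (f n).IsPositive) :
    (∑' n, f n).IsPositive := by
  constructor
  · rw [← ContinuousLinearMap.isSelfAdjoint_iff_isSymmetric, IsSelfAdjoint, tsum_star]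
    exact tsum_congr fun n => (hf n).isSelfAdjoint
  · intro x
    rw [reApplyInnerSelf, tsum_apply' hsum, inner_re_symm]
    have hsx : Summable fun n => f n x := hsum.map (ContinuousLinearMap.apply ℂ H x) (by continuity)
    have : Complex.re ⟪x, ∑' n, f n x⟫ = ∑' n, Complex.re ⟪x, f n x⟫ :=
      (RCLike.reCLM.comp ((innerSL ℂ x).restrictScalars ℝ)).map_tsum hsx
    rw [RCLike.re_to_complex, this]
    refine tsum_nonneg fun n => ?_
    rw [← RCLike.re_to_complex, ← inner_re_symm]
    exact (hf n).2 x

lemma isUnit_one_add_pos {P : H →L[ℂ] H} (hP : P.IsPositive) : IsUnit (1 + P) := by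
  refine isUnit_of_forall_le_norm_inner_map _ (c := 1) one_pos fun x => ?_
  have h1 : (‖x‖ : ℝ) ^ 2 ≤ Complex.re ⟪(1 + P) x, x⟫ := by
    have : ⟪(1 + P) x, x⟫ = ⟪x, x⟫ + ⟪P x, x⟫ := by
      simp [inner_add_left]
    rw [this]
    have := hP.2 x
    rw [reApplyInnerSelf] at this
    simp only [Complex.add_re]
    rw [← inner_self_eq_norm_sq (𝕜 := ℂ) x]
    simpa using this
  simpa only [NNReal.coe_one, mul_one] using h1.trans (Complex.re_le_norm _)

lemma range_top_of_isUnit {f : H →L[ℂ] H} (hf : IsUnit f) : LinearMap.range (f : H →ₗ[ℂ] H) = ⊤ :=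
  LinearMap.range_eq_top.2 (ContinuousLinearMap.isUnit_iff_bijective.mp hf).surjective

lemma backward (T : H →L[ℂ] H) (hr : spectralRadius ℂ T < 1) :
    ∃ A : H →L[ℂ] H, A.IsPositive ∧ IsUnit A ∧
      (adjoint T ∘L A ∘L T - adjoint T ∘L T).IsPositive ∧
      (A - adjoint T ∘L A ∘L T).IsPositive ∧
      LinearMap.range ((A - adjoint T ∘L A ∘L T : H →L[ℂ] H) : H →ₗ[ℂ] H) = ⊤ ∧
      LinearMap.range ((A - adjoint T ∘L T : H →L[ℂ] H) : H →ₗ[ℂ] H) = ⊤ := by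
  obtain ⟨ρ, hρr, hρ1⟩ := ENNReal.lt_iff_exists_nnreal_btwn.mp hr
  have hev := (spectrum.pow_nnnorm_pow_one_div_tendsto_nhds_spectralRadius T).eventually_lt_const hρr
  set g : ℕ → H →L[ℂ] H := fun n => star (T ^ n) * T ^ n with hg
  have hρ1' : (ρ : ℝ) < 1 := by exact_mod_cast hρ1
  have hρ0 : (0 : ℝ) ≤ (ρ : ℝ) := ρ.coe_nonneg
  have hbound : ∀ᶠ n in atTop, ‖g n‖ ≤ ((ρ:ℝ)^2) ^ n := by
    filter_upwards [hev, eventually_ge_atTop 1] with n hn h1n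
    have hne : ((n:ℝ)) ≠ 0 := by positivity
    have h2 := ENNReal.rpow_le_rpow hn.le (by positivity : (0:ℝ) ≤ (n:ℝ))
    rw [← ENNReal.rpow_mul, one_div, inv_mul_cancel₀ hne, ENNReal.rpow_one,
      ENNReal.rpow_natCast, ← ENNReal.coe_pow, ENNReal.coe_le_coe] at h2
    have hTn : ‖T ^ n‖ ≤ (ρ:ℝ) ^ n := by exact_mod_cast h2
    calc ‖g n‖ ≤ ‖star (T ^ n)‖ * ‖T ^ n‖ := norm_mul_le _ _
    _ = ‖T ^ n‖ * ‖T ^ n‖ := by rw [norm_star]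
    _ ≤ ((ρ:ℝ) ^ n) * ((ρ:ℝ) ^ n) := by
        apply mul_le_mul hTn hTn (norm_nonneg _) (by positivity)
    _ = ((ρ:ℝ)^2) ^ n := by ring
  have hsum : Summable g := Summable.of_norm_bounded_eventually_nat
    (summable_geometric_of_lt_one (by positivity) (by nlinarith)) hbound
  have hs1 : Summable fun n => g (n + 1) := (summable_nat_add_iff 1).2 hsum
  have hs2 : Summable fun n => g (n + 2) := (summable_nat_add_iff 2).2 hsum
  have hgpos : ∀ n, (g n).IsPositive := by
    intro n
    have h := (isPositive_one (E := H) (𝕜 := ℂ)).adjoint_conj (T ^ n)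
    simp only [one_def, id_comp] at h
    show (star (T ^ n) * T ^ n).IsPositive
    rwa [star_eq_adjoint, mul_def]
  set A : H →L[ℂ] H := ∑' n, g n with hA
  set Q : H →L[ℂ] H := ∑' n, g (n + 1) with hQ
  set P : H →L[ℂ] H := ∑' n, g (n + 2) with hP
  have hApos : A.IsPositive := isPositive_tsum hsum hgpos
  have hQpos : Q.IsPositive := isPositive_tsum hs1 fun n => hgpos _
  have hPpos : P.IsPositive := isPositive_tsum hs2 fun n => hgpos _
  have hA0 : A = 1 + Q := by
    rw [hA, Summable.tsum_eq_zero_add hsum, hQ]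
    congr 1
    simp [hg]
  have hQ0 : Q = star T * T + P := by
    rw [hQ, Summable.tsum_eq_zero_add hs1, hP]
    congr 1
  have hshift : ∀ n, g (n + 1) = star T * g n * T := fun n => by
    simp only [hg, pow_succ, star_mul, mul_assoc]
  have hΦ : star T * A * T = Q := by
    have Φdef : ∀ S : H →L[ℂ] H,
        ((compL ℂ H H H (star T)).comp ((compL ℂ H H H).flip T)) S = star T * S * T := by
      intro S
      simp [mul_def, comp_assoc]
    rw [← Φdef, hA, ContinuousLinearMap.map_tsum _ hsum, hQ]
    exact tsum_congr fun n => by rw [Φdef, ← hshift]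
  have key : adjoint T ∘L A ∘L T = Q := by
    rw [← star_eq_adjoint, ← mul_def, ← mul_def, ← mul_assoc, hΦ]
  have keyT : (adjoint T ∘L T : H →L[ℂ] H) = star T * T := by
    rw [← star_eq_adjoint, ← mul_def]
  refine ⟨A, hApos, ?_, ?_, ?_, ?_, ?_⟩
  · rw [hA0]; exact isUnit_one_add_pos hQpos
  · rw [key, keyT, hQ0]
    simpa using hPpos
  · rw [key, hA0]
    simpa using isPositive_one
  · rw [key, hA0]
    have : 1 + Q - Q = (1 : H →L[ℂ] H) := by abel
    rw [this]
    exact range_top_of_isUnit isUnit_one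
  · rw [keyT, hA0, hQ0]
    have : 1 + (star T * T + P) - star T * T = 1 + P := by abel
    rw [this]
    exact range_top_of_isUnit (isUnit_one_add_pos hPpos)

lemma forward (T : H →L[ℂ] H) (A : H →L[ℂ] H) (hA : A.IsPositive)
    (h2 : (A - adjoint T ∘L A ∘L T).IsPositive)
    (h3 : LinearMap.range ((A - adjoint T ∘L A ∘L T : H →L[ℂ] H) : H →ₗ[ℂ] H) = ⊤) :
    spectralRadius ℂ T < 1 := by
  rcases subsingleton_or_nontrivial H with hH | hH
  · have hT : T = 0 := ContinuousLinearMap.ext fun x => Subsingleton.elim _ _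
    rw [hT, spectrum.spectralRadius_zero]
    exact zero_lt_one
  set D : H →L[ℂ] H := A - adjoint T ∘L A ∘L T with hD
  have hDsa : ∀ y z : H, ⟪D y, z⟫ = ⟪y, D z⟫ := fun y z => by
    conv_lhs => rw [← h2.isSelfAdjoint.adjoint_eq]
    exact adjoint_inner_left D z y
  have hsurj : Function.Surjective D := LinearMap.range_eq_top.1 h3
  have hker : ∀ x, D x = 0 → x = 0 := by
    intro x hx
    have hy : ∀ y, ⟪x, D y⟫ = 0 := fun y => by rw [← hDsa, hx, inner_zero_left]
    have hxx : ⟪x, x⟫ = 0 := by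
      obtain ⟨y, hy'⟩ := hsurj x
      nth_rewrite 2 [← hy']
      exact hy y
    exact inner_self_eq_zero.1 hxx
  have hbij : Function.Bijective D := by
    constructor
    · intro a b hab
      have := hker (a - b) (by rw [map_sub, hab, sub_self])
      rwa [sub_eq_zero] at this
    · exact hsurj
  have hunit : IsUnit D := isUnit_iff_bijective.2 hbij
  obtain ⟨u, hu⟩ := hunit
  set k : ℝ := ‖((u⁻¹ : (H →L[ℂ] H)ˣ) : H →L[ℂ] H)‖ with hk
  have hxk : ∀ x, ‖x‖ ≤ k * ‖D x‖ := by
    intro x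
    have hx1 : ((u⁻¹ : (H →L[ℂ] H)ˣ) : H →L[ℂ] H) (D x) = x := by
      rw [← hu, ← ContinuousLinearMap.mul_apply, u.inv_mul, ContinuousLinearMap.one_apply]
    calc ‖x‖ = ‖((u⁻¹ : (H →L[ℂ] H)ˣ) : H →L[ℂ] H) (D x)‖ := by rw [hx1]
    _ ≤ k * ‖D x‖ := le_opNorm _ _
  obtain ⟨x₀, hx₀⟩ := exists_ne (0 : H)
  have hDne : D ≠ 0 := by
    intro h
    exact hx₀ (hker x₀ (by rw [h]; rfl))
  have hDnorm : 0 < ‖D‖ := norm_pos_iff.2 hDne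
  have hkpos : 0 < k := by
    by_contra h
    push_neg at h
    have := hxk x₀
    have hx0n : 0 < ‖x₀‖ := norm_pos_iff.2 hx₀
    nlinarith [norm_nonneg (D x₀)]
  set c : ℝ := (k ^ 2 * ‖D‖)⁻¹ with hc
  have hcpos : 0 < c := by rw [hc]; positivity
  have hlow : ∀ x, c * ‖x‖ ^ 2 ≤ Complex.re ⟪D x, x⟫ := by
    intro x
    have hcs := cs_pos h2 x
    have hsq : ‖x‖ ^ 2 ≤ k ^ 2 * ‖D x‖ ^ 2 := by nlinarith [hxk x, norm_nonneg x, norm_nonneg (D x)]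
    have h1 : ‖x‖ ^ 2 ≤ (k ^ 2 * ‖D‖) * Complex.re ⟪D x, x⟫ := by nlinarith [sq_nonneg k]
    calc c * ‖x‖ ^ 2 ≤ c * ((k ^ 2 * ‖D‖) * Complex.re ⟪D x, x⟫) := by
          exact mul_le_mul_of_nonneg_left h1 hcpos.le
    _ = Complex.re ⟪D x, x⟫ := by
          rw [hc]; field_simp
  have hstep : ∀ y, c * ‖y‖ ^ 2 + Complex.re ⟪A (T y), T y⟫ ≤ Complex.re ⟪A y, y⟫ := by
    intro y
    have hsplit : ⟪D y, y⟫ = ⟪A y, y⟫ - ⟪A (T y), T y⟫ := by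
      rw [hD]
      simp only [sub_apply, comp_apply, inner_sub_left]
      rw [adjoint_inner_left]
    have := hlow y
    rw [hsplit, Complex.sub_re] at this
    linarith
  set M : ℝ := ‖A‖ with hM
  have hbound0 : ∀ x, Complex.re ⟪A x, x⟫ ≤ M * ‖x‖ ^ 2 := by
    intro x
    calc Complex.re ⟪A x, x⟫ ≤ ‖⟪A x, x⟫‖ := Complex.re_le_norm _
    _ ≤ ‖A x‖ * ‖x‖ := norm_inner_le_norm _ _
    _ ≤ (M * ‖x‖) * ‖x‖ := by gcongr; exact le_opNorm _ _
    _ = M * ‖x‖ ^ 2 := by ring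
  have hApos : ∀ y, 0 ≤ Complex.re ⟪A y, y⟫ := fun y => hA.2 y
  have htel : ∀ n x, c * ∑ j ∈ Finset.range n, ‖(T ^ j) x‖ ^ 2
      ≤ Complex.re ⟪A x, x⟫ - Complex.re ⟪A ((T ^ n) x), (T ^ n) x⟫ := by
    intro n x
    induction n with
    | zero => simp
    | succ n ih =>
      rw [Finset.sum_range_succ, mul_add]
      have hs := hstep ((T ^ n) x)
      have hTn1 : (T ^ (n + 1)) x = T ((T ^ n) x) := by
        rw [pow_succ']; rfl
      rw [hTn1]
      linarith
  have hsumb : ∀ n x, c * ∑ j ∈ Finset.range n, ‖(T ^ j) x‖ ^ 2 ≤ M * ‖x‖ ^ 2 := by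
    intro n x
    have := htel n x
    have h0 := hApos ((T ^ n) x)
    have h1 := hbound0 x
    linarith
  have hsingle : ∀ j (y : H), c * ‖(T ^ j) y‖ ^ 2 ≤ M * ‖y‖ ^ 2 := by
    intro j y
    have hle : ‖(T ^ j) y‖ ^ 2 ≤ ∑ i ∈ Finset.range (j + 1), ‖(T ^ i) y‖ ^ 2 :=
      Finset.single_le_sum (f := fun i => ‖(T ^ i) y‖ ^ 2)
        (fun i _ => by positivity) (Finset.self_mem_range_succ j)
    calc c * ‖(T ^ j) y‖ ^ 2 ≤ c * ∑ i ∈ Finset.range (j + 1), ‖(T ^ i) y‖ ^ 2 :=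
        mul_le_mul_of_nonneg_left hle hcpos.le
    _ ≤ M * ‖y‖ ^ 2 := hsumb (j + 1) y
  have hfinal : ∀ (n : ℕ) (x : H), (n : ℝ) * (c * ‖(T ^ n) x‖ ^ 2) ≤ M * (M * ‖x‖ ^ 2 / c) := by
    intro n x
    have heach : ∀ j ∈ Finset.range n, c * ‖(T ^ n) x‖ ^ 2 ≤ M * ‖(T ^ j) x‖ ^ 2 := by
      intro j hj
      have hjn : j ≤ n := (Finset.mem_range.1 hj).le
      have hpow : (T ^ n) x = (T ^ (n - j)) ((T ^ j) x) := by
        rw [← ContinuousLinearMap.mul_apply, ← pow_add, Nat.sub_add_cancel hjn]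
      rw [hpow]
      exact hsingle (n - j) ((T ^ j) x)
    have hsum2 : ∑ j ∈ Finset.range n, (c * ‖(T ^ n) x‖ ^ 2)
        ≤ ∑ j ∈ Finset.range n, M * ‖(T ^ j) x‖ ^ 2 := Finset.sum_le_sum heach
    rw [Finset.sum_const, Finset.card_range, nsmul_eq_mul] at hsum2
    have hsum3 : ∑ j ∈ Finset.range n, M * ‖(T ^ j) x‖ ^ 2
        = M * ∑ j ∈ Finset.range n, ‖(T ^ j) x‖ ^ 2 := by rw [Finset.mul_sum]
    have hsum4 : ∑ j ∈ Finset.range n, ‖(T ^ j) x‖ ^ 2 ≤ M * ‖x‖ ^ 2 / c := by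
      rw [le_div_iff₀ hcpos]
      have := hsumb n x
      linarith
    have hMnn : 0 ≤ M := norm_nonneg A
    calc (n : ℝ) * (c * ‖(T ^ n) x‖ ^ 2) ≤ M * ∑ j ∈ Finset.range n, ‖(T ^ j) x‖ ^ 2 := by
          rw [← hsum3]; exact hsum2
    _ ≤ M * (M * ‖x‖ ^ 2 / c) := mul_le_mul_of_nonneg_left hsum4 hMnn
  -- choose n
  set m : ℕ := ⌈(M / c) ^ 2⌉₊ with hm
  set n : ℕ := m + 1 with hn
  have hnpos : (0 : ℝ) < n := by positivity
  set r2 : ℝ := (M / c) ^ 2 / n with hr2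
  have hr2nn : 0 ≤ r2 := by positivity
  have hr2lt : r2 < 1 := by
    rw [hr2, div_lt_one hnpos]
    calc (M / c) ^ 2 ≤ (m : ℝ) := Nat.le_ceil _
    _ < n := by rw [hn]; push_cast; linarith
  have hTx : ∀ x, ‖(T ^ n) x‖ ≤ Real.sqrt r2 * ‖x‖ := by
    intro x
    have h1 := hfinal n x
    have h2' : ‖(T ^ n) x‖ ^ 2 ≤ r2 * ‖x‖ ^ 2 := by
      rw [hr2]
      rw [div_mul_eq_mul_div, le_div_iff₀ hnpos]
      have hMnn : 0 ≤ M := norm_nonneg A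
      have : (M / c) ^ 2 * ‖x‖ ^ 2 = (M * (M * ‖x‖ ^ 2 / c)) / c := by field_simp
      rw [mul_comm (‖(T ^ n) x‖ ^ 2) (n:ℝ), this, le_div_iff₀ hcpos]
      calc (n : ℝ) * ‖(T ^ n) x‖ ^ 2 * c = (n : ℝ) * (c * ‖(T ^ n) x‖ ^ 2) := by ring
      _ ≤ M * (M * ‖x‖ ^ 2 / c) := h1
    calc ‖(T ^ n) x‖ = Real.sqrt (‖(T ^ n) x‖ ^ 2) := by
          rw [Real.sqrt_sq (norm_nonneg _)]
    _ ≤ Real.sqrt (r2 * ‖x‖ ^ 2) := Real.sqrt_le_sqrt h2'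
    _ = Real.sqrt r2 * ‖x‖ := by
          rw [Real.sqrt_mul hr2nn, Real.sqrt_sq (norm_nonneg _)]
  have hop : ‖T ^ n‖ ≤ Real.sqrt r2 := opNorm_le_bound _ (Real.sqrt_nonneg _) hTx
  have hlt1 : ‖T ^ n‖ < 1 := by
    refine hop.trans_lt ?_
    rw [show (1:ℝ) = Real.sqrt 1 from (Real.sqrt_one).symm]
    exact Real.sqrt_lt_sqrt hr2nn hr2lt
  -- conclude
  have hmain := spectrum.spectralRadius_le_pow_nnnorm_pow_one_div ℂ T m
  have hppos : (0 : ℝ) < 1 / (m + 1 : ℝ) := by positivity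
  have ha1 : (‖T ^ (m + 1)‖₊ : ℝ≥0∞) < 1 := by
    rw [← hn]
    exact_mod_cast (by exact_mod_cast hlt1 : ‖T ^ n‖₊ < 1)
  have hb1 : (‖(1 : H →L[ℂ] H)‖₊ : ℝ≥0∞) ≤ 1 := by
    have : ‖(1 : H →L[ℂ] H)‖ ≤ 1 := norm_id_le
    exact_mod_cast (by exact_mod_cast this : ‖(1 : H →L[ℂ] H)‖₊ ≤ 1)
  calc spectralRadius ℂ T
      ≤ (‖T ^ (m + 1)‖₊ : ℝ≥0∞) ^ (1 / (m + 1) : ℝ) * (‖(1 : H →L[ℂ] H)‖₊ : ℝ≥0∞) ^ (1 / (m + 1) : ℝ) := hmain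
    _ ≤ (‖T ^ (m + 1)‖₊ : ℝ≥0∞) ^ (1 / (m + 1) : ℝ) * 1 := by
        gcongr
        exact ENNReal.rpow_le_one hb1 hppos.le
    _ = (‖T ^ (m + 1)‖₊ : ℝ≥0∞) ^ (1 / (m + 1) : ℝ) := mul_one _
    _ < 1 := ENNReal.rpow_lt_one ha1 hppos

end SpectralAux


open ContinuousLinearMap

/-- For `T ∈ B(H)`: there exists an invertible positive `A ∈ B(H)` such that
`T*T ≤ T*AT ≤ A` and `R(A - T*AT) = H = R(A - T*T)`, if and only if the spectral radius of `T`
is strictly less than `1`. -/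
theorem exists_surjective_defects_iff_spectralRadius_lt_one
    {H : Type*} [NormedAddCommGroup H] [InnerProductSpace ℂ H] [CompleteSpace H]
    (T : H →L[ℂ] H) :
    (∃ A : H →L[ℂ] H, A.IsPositive ∧ IsUnit A ∧
      (adjoint T ∘L A ∘L T - adjoint T ∘L T).IsPositive ∧
      (A - adjoint T ∘L A ∘L T).IsPositive ∧
      LinearMap.range ((A - adjoint T ∘L A ∘L T : H →L[ℂ] H) : H →ₗ[ℂ] H) = ⊤ ∧
      LinearMap.range ((A - adjoint T ∘L T : H →L[ℂ] H) : H →ₗ[ℂ] H) = ⊤) ↔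
    spectralRadius ℂ T < 1 := by
  constructor
  · rintro ⟨A, hA, -, -, h2, h3, -⟩
    exact SpectralAux.forward T A hA h2 h3
  · exact SpectralAux.backward T
end

section
/- Let T ∈ B(H) satisfy T*T ≤ T*²T² = T*³T³. Then W = T restricted to the closure of R(T) satisfies I ≤ W*W = W*²W², i.e., W is an expansive quasi-isometry. -/
open ContinuousLinearMap

/-- Let `T ∈ B(H)` satisfy `T*T ≤ T*²T² = T*³T³`. Then `W = T |_{R(T)‾}`
satisfies `I ≤ W*W = W*²W²`, i.e. `W` is an expansive quasi-isometry: for every `x` in the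
closure of the range of `T` one has `‖x‖ ≤ ‖T x‖` and `‖T (T x)‖ = ‖T x‖`. -/
theorem restriction_expansive_quasiIsometry
    {H : Type*} [NormedAddCommGroup H] [InnerProductSpace ℂ H] [CompleteSpace H]
    (T : H →L[ℂ] H)
    (h1 : (adjoint T ∘L adjoint T ∘L T ∘L T - adjoint T ∘L T).IsPositive)
    (h2 : adjoint T ∘L adjoint T ∘L T ∘L T =
      adjoint T ∘L adjoint T ∘L adjoint T ∘L T ∘L T ∘L T) :
    ∀ x ∈ (LinearMap.range (T : H →ₗ[ℂ] H)).topologicalClosure, ‖x‖ ≤ ‖T x‖ ∧ ‖T (T x)‖ = ‖T x‖ := by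
  have key : ∀ y ∈ (LinearMap.range (T : H →ₗ[ℂ] H) : Set H), ‖y‖ ≤ ‖T y‖ ∧ ‖T (T y)‖ = ‖T y‖ := by
    rintro _ ⟨x, rfl⟩
    constructor
    · have h := h1.2 x
      simp only [reApplyInnerSelf, sub_apply, comp_apply, inner_sub_left,
        adjoint_inner_left, inner_self_eq_norm_sq_to_K] at h
      have h' : ‖T x‖ ^ 2 ≤ ‖T (T x)‖ ^ 2 := by
        simpa [RCLike.re_to_complex, ← Complex.ofReal_pow, ← Complex.ofReal_sub,
          sub_nonneg] using h
      exact (pow_le_pow_iff_left₀ (norm_nonneg _) (norm_nonneg _) two_ne_zero).mp h'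
    · have h := congrArg (fun A : H →L[ℂ] H => (inner ℂ (A x) x : ℂ)) h2
      simp only [comp_apply, adjoint_inner_left, inner_self_eq_norm_sq_to_K] at h
      have h' : ‖T (T x)‖ ^ 2 = ‖T (T (T x))‖ ^ 2 := by exact_mod_cast h
      exact le_antisymm
        ((pow_le_pow_iff_left₀ (norm_nonneg _) (norm_nonneg _) two_ne_zero).mp h'.ge)
        ((pow_le_pow_iff_left₀ (norm_nonneg _) (norm_nonneg _) two_ne_zero).mp h'.le)
  intro x hx
  have hcl : IsClosed {x : H | ‖x‖ ≤ ‖T x‖ ∧ ‖T (T x)‖ = ‖T x‖} :=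
    (isClosed_le continuous_norm T.continuous.norm).inter
      (isClosed_eq ((T.continuous.comp T.continuous).norm) T.continuous.norm)
  have hx' : x ∈ closure (LinearMap.range (T : H →ₗ[ℂ] H) : Set H) := hx
  exact closure_minimal key hcl hx'
end

section
/- If W ∈ B(M) is an expansive quasi-isometry (I ≤ W*W = W*²W²), then W*W N(W*) ⊆ N(W*), and W is isometric on R(W): W*W w = w for all w ∈ R(W). -/
open ContinuousLinearMap
open scoped InnerProductSpace

set_option synthInstance.maxHeartbeats 1000000 in
set_option maxHeartbeats 1000000 in
/-- Auxiliary: a positive operator with vanishing quadratic form at a point kills that point. -/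
lemma isPositive_apply_eq_zero_of_inner_eq_zero
    {M : Type*} [NormedAddCommGroup M] [InnerProductSpace ℂ M] [CompleteSpace M]
    (P : M →L[ℂ] M) (hP : P.IsPositive) (y : M)
    (h : ⟪P y, y⟫_ℂ = 0) : P y = 0 := by
  have hP0 : (0 : M →L[ℂ] M) ≤ P := (nonneg_iff_isPositive P).mpr hP
  set S : M →L[ℂ] M := CFC.sqrt P with hS
  have hSS : S * S = P := CFC.sqrt_mul_sqrt_self P hP0
  have hS0 : (0 : M →L[ℂ] M) ≤ S := CFC.sqrt_nonneg P
  have hSsa : IsSelfAdjoint S := IsSelfAdjoint.of_nonneg hS0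
  have hadj : adjoint S = S := hSsa.adjoint_eq
  have hinner : ⟪S y, S y⟫_ℂ = 0 := by
    have h1 : ⟪S (S y), y⟫_ℂ = 0 := by
      have h2 : (S * S) y = P y := by rw [hSS]
      change S (S y) = P y at h2
      rw [h2, h]
    calc ⟪S y, S y⟫_ℂ = ⟪adjoint S (S y), y⟫_ℂ := by rw [adjoint_inner_left]
      _ = ⟪S (S y), y⟫_ℂ := by rw [hadj]
      _ = 0 := h1
  have hSy : S y = 0 := by rwa [inner_self_eq_zero] at hinner
  calc P y = (S * S) y := by rw [hSS]
    _ = S (S y) := rfl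
    _ = 0 := by rw [hSy, map_zero]

/-- If `W ∈ B(M)` is an expansive quasi-isometry (`I ≤ W*W = W*²W²`), then
`W*W N(W*) ⊆ N(W*)`, and `W` is isometric on `R(W)`: `W*W w = w` for all `w ∈ R(W)`. -/
theorem expansive_quasiIsometry_kernel_and_range
    {M : Type*} [NormedAddCommGroup M] [InnerProductSpace ℂ M] [CompleteSpace M]
    (W : M →L[ℂ] M)
    (h1 : (adjoint W ∘L W - 1).IsPositive)
    (h2 : adjoint W ∘L adjoint W ∘L W ∘L W = adjoint W ∘L W) :
    (∀ x ∈ LinearMap.ker (adjoint W : M →ₗ[ℂ] M), (adjoint W ∘L W) x ∈ LinearMap.ker (adjoint W : M →ₗ[ℂ] M)) ∧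
    (∀ x : M, (adjoint W ∘L W) (W x) = W x) := by
  set P : M →L[ℂ] M := adjoint W ∘L W - 1 with hPdef
  have key : ∀ x : M, P (W x) = 0 := by
    intro x
    apply isPositive_apply_eq_zero_of_inner_eq_zero P h1
    have hker : adjoint W (P (W x)) = 0 := by
      have h3 := congrArg (fun T : M →L[ℂ] M => T x) h2
      simp only [comp_apply] at h3
      simp [hPdef, comp_apply, sub_apply, one_apply, map_sub, h3]
    calc ⟪P (W x), W x⟫_ℂ = ⟪adjoint W (P (W x)), x⟫_ℂ := by
          rw [adjoint_inner_left]
      _ = 0 := by rw [hker, inner_zero_left]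
  have part2 : ∀ x : M, (adjoint W ∘L W) (W x) = W x := by
    intro x
    have h4 := key x
    simp only [hPdef, sub_apply, one_apply, sub_eq_zero] at h4
    exact h4
  refine ⟨?_, part2⟩
  intro x hx
  have hx0 : adjoint W x = 0 := hx
  rw [LinearMap.mem_ker]
  have hall : ∀ y : M, ⟪adjoint W ((adjoint W ∘L W) x), y⟫_ℂ = ⟪(0 : M), y⟫_ℂ := by
    intro y
    rw [inner_zero_left]
    calc ⟪adjoint W ((adjoint W ∘L W) x), y⟫_ℂ
        = ⟪(adjoint W ∘L W) x, W y⟫_ℂ := by rw [adjoint_inner_left]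
      _ = ⟪adjoint W (W x), W y⟫_ℂ := by rw [comp_apply]
      _ = ⟪W x, W (W y)⟫_ℂ := by rw [adjoint_inner_left]
      _ = ⟪x, adjoint W (W (W y))⟫_ℂ := by rw [adjoint_inner_right]
      _ = ⟪x, (adjoint W ∘L W) (W y)⟫_ℂ := by rw [comp_apply]
      _ = ⟪x, W y⟫_ℂ := by rw [part2 y]
      _ = ⟪adjoint W x, y⟫_ℂ := by rw [adjoint_inner_left]
      _ = 0 := by rw [hx0, inner_zero_left]
  exact ext_inner_right ℂ hall
end
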